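/- In a connected graph, the distance between two distinct blocks B_1 and B_2 (minimum over vertices x in B_1, y in B_2 of d(x,y)) is zero if and only if B_1 and B_2 share a vertex; and for three blocks, if d(B_2,B_3) > d(B_1,B_2) + d(B_1,B_3), then every path from a vertex of B_2 to a vertex of B_3 realizing the distance passes through at least two distinct vertices of B_1. -/

import Mathlib

open scoped Classical

/-- A finite multigraph: edges with a source and target vertex. -/
structure Multigraph (V E : Type) where
  src : E → V
  tgt : E → V

/-- A dart is an oriented edge: an edge together with a direction. -/
abbrev Dart (E : Type) := E × Bool

namespace Multigraph

variable {V E : Type}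

/-- Source of a dart. -/
def dsrc (G : Multigraph V E) (d : Dart E) : V := if d.2 then G.src d.1 else G.tgt d.1

/-- Target of a dart. -/
def dtgt (G : Multigraph V E) (d : Dart E) : V := if d.2 then G.tgt d.1 else G.src d.1

/-- A closed walk: a nonempty cyclically consistent list of darts. -/
def IsClosedWalk (G : Multigraph V E) (w : List (Dart E)) : Prop :=
  w ≠ [] ∧ List.Chain' (fun d d' => G.dtgt d = G.dsrc d') w ∧
    ∀ dl ∈ w.getLast?, ∀ dh ∈ w.head?, G.dtgt dl = G.dsrc dh

/-- A cycle: a closed walk repeating no edges and no vertices. -/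
def IsCycle (G : Multigraph V E) (w : List (Dart E)) : Prop :=
  G.IsClosedWalk w ∧ (w.map Prod.fst).Nodup ∧ (w.map G.dsrc).Nodup

/-- A walk from `u` to `v`. -/
def IsWalkFrom (G : Multigraph V E) (w : List (Dart E)) (u v : V) : Prop :=
  List.Chain' (fun d d' => G.dtgt d = G.dsrc d') w ∧
    (w = [] → u = v) ∧ (∀ d ∈ w.head?, G.dsrc d = u) ∧ (∀ d ∈ w.getLast?, G.dtgt d = v)

/-- Connectivity: any two vertices are joined by a walk. -/
def Conn (G : Multigraph V E) : Prop := ∀ u v : V, ∃ w, G.IsWalkFrom w u v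

/-- The 1-chain (with `ℤ` coefficients) of a single dart. -/
noncomputable def dartChain (d : Dart E) : E → ℤ :=
  fun e => if d.1 = e then (if d.2 then 1 else -1) else 0

/-- The 1-chain of a walk. -/
noncomputable def chain (w : List (Dart E)) : E → ℤ := (w.map dartChain).sum

/-- The length of a walk given edge lengths `l`. -/
def walkLength (l : E → ℝ) (w : List (Dart E)) : ℝ := (w.map fun d => l d.1).sum

/-- The set of (unoriented) edges used by a walk. -/
def edges (w : List (Dart E)) : Set E := {e | ∃ b, (e, b) ∈ w}

/-- The set of vertices visited by a closed walk. -/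
def vertsOf (G : Multigraph V E) (w : List (Dart E)) : Set V := {v | ∃ d ∈ w, G.dsrc d = v}

/-- Restriction of a graph to a set of edges. -/
def restrict (G : Multigraph V E) (S : Set E) : Multigraph V S where
  src e := G.src e.1
  tgt e := G.tgt e.1

/-- Deletion of a set of vertices (and all incident edges). -/
def deleteVerts (G : Multigraph V E) (X : Set V) :
    Multigraph {v // v ∉ X} {e // G.src e ∉ X ∧ G.tgt e ∉ X} where
  src e := ⟨G.src e.1, e.2.1⟩
  tgt e := ⟨G.tgt e.1, e.2.2⟩

/-- Degree of a vertex (loops count twice). -/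
noncomputable def degree (G : Multigraph V E) [Fintype E] (v : V) : ℕ :=
  (Finset.univ.filter fun e => G.src e = v).card +
  (Finset.univ.filter fun e => G.tgt e = v).card

/-- The boundary of a 1-chain. -/
noncomputable def boundary (G : Multigraph V E) [Fintype E] (x : E → ℤ) : V → ℤ :=
  fun v => ∑ e, x e * ((if G.tgt e = v then 1 else 0) - (if G.src e = v then 1 else 0))

/-- The first homology `H₁(G,ℤ)`, as the kernel of the boundary map. -/
def H1 (G : Multigraph V E) [Fintype E] : Submodule ℤ (E → ℤ) where
  carrier := {x | G.boundary x = 0}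
  add_mem' := by
    intro a b ha hb
    have h : G.boundary (a + b) = G.boundary a + G.boundary b := by
      funext v
      simp [boundary, add_mul, Finset.sum_add_distrib]
    simp only [Set.mem_setOf_eq] at *
    rw [h, ha, hb, add_zero]
  zero_mem' := by
    simp only [Set.mem_setOf_eq]
    funext v
    simp [boundary]
  smul_mem' := by
    intro c x hx
    have h : G.boundary (c • x) = c • G.boundary x := by
      funext v
      simp [boundary, Finset.mul_sum, mul_assoc]
    simp only [Set.mem_setOf_eq] at *
    rw [h, hx, smul_zero]

/-- The path metric induced by edge lengths. -/
noncomputable def gdist (G : Multigraph V E) (l : E → ℝ) (u v : V) : ℝ :=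
  sInf {x | ∃ w, G.IsWalkFrom w u v ∧ walkLength l w = x}

/-- Minimal length of a closed walk in a given homology class. -/
noncomputable def minLen (G : Multigraph V E) (l : E → ℝ) (h : E → ℤ) : ℝ :=
  sInf {x | ∃ w, G.IsClosedWalk w ∧ chain w = h ∧ walkLength l w = x}

end Multigraph

open Multigraph

/-- The relation generating block equivalence: two cycles are related if they share an edge. -/
def CycleRel {V E : Type} (G : Multigraph V E) :
    {w : List (Dart E) // G.IsCycle w} → {w : List (Dart E) // G.IsCycle w} → Prop :=
  fun a b => ∃ e, e ∈ Multigraph.edges a.1 ∧ e ∈ Multigraph.edges b.1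

/-- Blocks: equivalence classes of cycles under the relation generated by edge-sharing. -/
def Block {V E : Type} (G : Multigraph V E) := Quot (CycleRel G)

/-- The set of vertices lying on a block. -/
def vertsOfBlock {V E : Type} (G : Multigraph V E) (B : Block G) : Set V :=
  {v | ∃ c : {w : List (Dart E) // G.IsCycle w},
    Quot.mk (CycleRel G) c = B ∧ v ∈ G.vertsOf c.1}

/-- A cut vertex: a vertex whose deletion disconnects the graph. -/
def IsCutVertex {V E : Type} (G : Multigraph V E) (v : V) : Prop :=
  ¬ (G.deleteVerts {v}).Conn

/-- The distance between two blocks: the infimum of distances between their vertex sets. -/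
noncomputable def blockDist {V E : Type} (G : Multigraph V E) (l : E → ℝ)
    (B1 B2 : Block G) : ℝ :=
  sInf {x | ∃ u ∈ vertsOfBlock G B1, ∃ v ∈ vertsOfBlock G B2, G.gdist l u v = x}

/-- The set of vertices visited by a walk starting at `u`. -/
def walkVerts {V E : Type} (G : Multigraph V E) (u : V) (w : List (Dart E)) : Set V :=
  insert u {v | ∃ d ∈ w, G.dtgt d = v}

namespace Multigraph

variable {V E : Type}

/-- Flip a dart. -/
def dflip (d : Dart E) : Dart E := (d.1, !d.2)

@[simp] lemma dsrc_dflip (G : Multigraph V E) (d : Dart E) : G.dsrc (dflip d) = G.dtgt d := by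
  cases d with | mk e b => cases b <;> simp [dsrc, dtgt, dflip]

@[simp] lemma dtgt_dflip (G : Multigraph V E) (d : Dart E) : G.dtgt (dflip d) = G.dsrc d := by
  cases d with | mk e b => cases b <;> simp [dsrc, dtgt, dflip]

@[simp] lemma fst_dflip (d : Dart E) : (dflip d).1 = d.1 := rfl

/-- Inductive characterization of walks. -/
inductive W (G : Multigraph V E) : V → List (Dart E) → V → Prop
  | nil (u : V) : W G u [] u
  | cons (d : Dart E) {rest : List (Dart E)} {v : V}
      (h : W G (G.dtgt d) rest v) : W G (G.dsrc d) (d :: rest) v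

lemma W.cons' {G : Multigraph V E} {u : V} (d : Dart E) {rest : List (Dart E)} {v : V}
    (hu : G.dsrc d = u) (h : W G (G.dtgt d) rest v) : W G u (d :: rest) v := hu ▸ W.cons d h

lemma W.nil_inv {G : Multigraph V E} {u v : V} (h : W G u [] v) : u = v := by
  cases h; rfl

lemma W.cons_inv {G : Multigraph V E} {u v : V} {d : Dart E} {rest : List (Dart E)}
    (h : W G u (d :: rest) v) : G.dsrc d = u ∧ W G (G.dtgt d) rest v := by
  cases h; exact ⟨rfl, by assumption⟩

lemma isWalkFrom_iff_W {G : Multigraph V E} {w : List (Dart E)} {u v : V} :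
    G.IsWalkFrom w u v ↔ W G u w v := by
  constructor
  · intro h
    induction w generalizing u with
    | nil =>
      have := h.2.1 rfl; subst this; exact W.nil u
    | cons d rest ih =>
      obtain ⟨hc, _, hh, hl⟩ := h
      have hd : G.dsrc d = u := hh d rfl
      have hc' := (List.isChain_cons.mp hc)
      refine W.cons' d hd (ih ⟨hc'.2, ?_, ?_, ?_⟩)
      · intro hre
        subst hre
        have := hl d rfl
        exact this
      · intro d' hd'
        exact (hc'.1 d' hd').symm
      · intro d' hd'
        refine hl d' ?_
        cases rest with
        | nil => simp at hd'
        | cons a t => rw [List.getLast?_cons_cons]; exact hd'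
  · intro h
    induction h with
    | nil u => exact ⟨List.isChain_nil, fun _ => rfl, by simp, by simp⟩
    | cons d h ih =>
      obtain ⟨hc, hn, hh, hl⟩ := ih
      refine ⟨List.isChain_cons.mpr ⟨fun y hy => (hh y hy).symm, hc⟩, by simp, by simp, ?_⟩
      intro d' hd'
      rename_i rest v
      cases rest with
      | nil => simp at hd'; subst hd'; exact (hn rfl) ▸ rfl
      | cons a t =>
        rw [List.getLast?_cons_cons] at hd'
        exact hl d' hd'

lemma W.append {G : Multigraph V E} {u v z : V} {w1 w2 : List (Dart E)}
    (h1 : W G u w1 v) (h2 : W G v w2 z) : W G u (w1 ++ w2) z := by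
  induction h1 with
  | nil => exact h2
  | cons d h ih => exact W.cons d (ih h2)

lemma W.split {G : Multigraph V E} {u v : V} {w1 w2 : List (Dart E)}
    (h : W G u (w1 ++ w2) v) : ∃ m, W G u w1 m ∧ W G m w2 v := by
  induction w1 generalizing u with
  | nil => exact ⟨u, W.nil u, h⟩
  | cons d t ih =>
    obtain ⟨hd, h'⟩ := h.cons_inv
    obtain ⟨m, hm1, hm2⟩ := ih h'
    exact ⟨m, W.cons' d hd hm1, hm2⟩

lemma W.reverse {G : Multigraph V E} {u v : V} {w : List (Dart E)}
    (h : W G u w v) : W G v (w.reverse.map dflip) u := by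
  induction h with
  | nil u => exact W.nil u
  | cons d h ih =>
    rename_i rest v
    have : W G (G.dtgt d) [dflip d] (G.dsrc d) := by
      refine W.cons' (dflip d) (by simp) ?_
      simp only [dtgt_dflip]
      exact W.nil _
    simpa using ih.append this

end Multigraph
namespace Multigraph

variable {V E : Type}

lemma walkLength_nonneg {l : E → ℝ} (hl : ∀ e, 0 < l e) (w : List (Dart E)) :
    0 ≤ walkLength l w := by
  refine List.sum_nonneg ?_
  intro x hx
  simp only [List.mem_map] at hx
  obtain ⟨d, _, rfl⟩ := hx
  exact (hl d.1).le

lemma walkLength_append (l : E → ℝ) (w1 w2 : List (Dart E)) :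
    walkLength l (w1 ++ w2) = walkLength l w1 + walkLength l w2 := by
  simp [walkLength]

lemma walkLength_cons (l : E → ℝ) (d : Dart E) (w : List (Dart E)) :
    walkLength l (d :: w) = l d.1 + walkLength l w := by
  simp [walkLength]

lemma walkLength_reverse_flip (l : E → ℝ) (w : List (Dart E)) :
    walkLength l (w.reverse.map dflip) = walkLength l w := by
  simp only [walkLength, List.map_map, List.map_reverse, List.sum_reverse]
  rfl

/-- The vertex list of a walk from `u`. -/
def vlist (G : Multigraph V E) (u : V) (w : List (Dart E)) : List V :=
  u :: w.map G.dtgt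

lemma vlist_eq_dsrc_append {G : Multigraph V E} {u v : V} {w : List (Dart E)}
    (h : W G u w v) : G.vlist u w = w.map G.dsrc ++ [v] := by
  induction h with
  | nil u => rfl
  | cons d h ih =>
    simp only [vlist] at ih ⊢
    simp [ih]

lemma mem_walkVerts_iff {G : Multigraph V E} {u z : V} {w : List (Dart E)} :
    z ∈ walkVerts G u w ↔ z ∈ G.vlist u w := by
  simp [walkVerts, vlist, eq_comm]

lemma last_mem_vlist {G : Multigraph V E} {u v : V} {w : List (Dart E)}
    (h : W G u w v) : v ∈ G.vlist u w := by
  rw [vlist_eq_dsrc_append h]; simp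

lemma dsrc_mem_vlist {G : Multigraph V E} {u v : V} {w : List (Dart E)}
    (h : W G u w v) {d : Dart E} (hd : d ∈ w) : G.dsrc d ∈ G.vlist u w := by
  rw [vlist_eq_dsrc_append h]
  exact List.mem_append_left _ (List.mem_map_of_mem hd)

lemma dtgt_mem_vlist {G : Multigraph V E} (u : V) {w : List (Dart E)}
    {d : Dart E} (hd : d ∈ w) : G.dtgt d ∈ G.vlist u w := by
  simp only [vlist, List.mem_cons]
  exact Or.inr (List.mem_map_of_mem hd)

/-- A closed walk, viewed as a walk from the source of its head. -/
lemma closedWalk_W {G : Multigraph V E} {w : List (Dart E)} (h : G.IsClosedWalk w)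
    {d0 : Dart E} (h0 : w.head? = some d0) : W G (G.dsrc d0) w (G.dsrc d0) := by
  rw [← isWalkFrom_iff_W]
  obtain ⟨hne, hc, hwrap⟩ := h
  refine ⟨hc, fun h' => absurd h' hne, ?_, ?_⟩
  · intro d hd; rw [h0] at hd; cases hd; rfl
  · intro d hd
    exact hwrap d hd d0 h0

lemma IsClosedWalk.rotate_one {G : Multigraph V E} {w : List (Dart E)}
    (h : G.IsClosedWalk w) : G.IsClosedWalk (w.rotate 1) := by
  obtain ⟨hne, hc, hwrap⟩ := h
  cases w with
  | nil => exact absurd rfl hne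
  | cons d rest =>
    cases rest with
    | nil =>
      rw [List.rotate_singleton]
      exact ⟨hne, hc, hwrap⟩
    | cons a t =>
      have hrot : (d :: a :: t).rotate 1 = (a :: t) ++ [d] := by
        simp [List.rotate_cons_succ, List.rotate_zero]
      rw [hrot]
      have hc' := (List.isChain_cons.mp hc).2
      have hfirst : G.dtgt d = G.dsrc a := (List.isChain_cons.mp hc).1 a rfl
      constructor
      · simp
      constructor
      · refine List.IsChain.append hc' (List.isChain_singleton d) ?_
        intro x hx y hy
        simp only [List.head?_cons, Option.mem_def, Option.some.injEq] at hy
        subst hy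
        refine hwrap x ?_ d rfl
        rw [List.getLast?_cons_cons]
        exact hx
      · intro dl hdl dh hdh
        have h1 : ((a :: t) ++ [d]).getLast? = some d := List.getLast?_concat
        rw [h1] at hdl
        cases hdl
        have : dh = a := by
          simp only [List.cons_append, List.head?_cons, Option.mem_def, Option.some.injEq] at hdh
          exact hdh.symm
        subst this
        exact hfirst

lemma IsClosedWalk.rotate {G : Multigraph V E} {w : List (Dart E)}
    (h : G.IsClosedWalk w) (n : ℕ) : G.IsClosedWalk (w.rotate n) := by
  induction n with
  | zero => simpa using h
  | succ k ih =>
    have : w.rotate (k + 1) = (w.rotate k).rotate 1 := by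
      rw [List.rotate_rotate]
    rw [this]
    exact ih.rotate_one

end Multigraph
namespace Multigraph

variable {V E : Type}

lemma vlist_cons (G : Multigraph V E) (u : V) (d : Dart E) (w : List (Dart E)) :
    G.vlist u (d :: w) = u :: G.vlist (G.dtgt d) w := rfl

/-- Walk between any two vertices of a closed walk, within its darts. -/
lemma closedWalk_connect {G : Multigraph V E} {w : List (Dart E)} (h : G.IsClosedWalk w)
    {u v : V} (hu : u ∈ G.vertsOf w) (hv : v ∈ G.vertsOf w) :
    ∃ p, W G u p v ∧ ∀ d ∈ p, d ∈ w := by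
  obtain ⟨du, hdu, rfl⟩ := hu
  obtain ⟨s, t, rfl⟩ := List.append_of_mem hdu
  have hw' : (s ++ du :: t).rotate s.length = (du :: t) ++ s := by
    rw [List.rotate_eq_drop_append_take (by simp), List.drop_left, List.take_left]
  have hcl : G.IsClosedWalk ((du :: t) ++ s) := hw' ▸ h.rotate s.length
  have hW : W G (G.dsrc du) ((du :: t) ++ s) (G.dsrc du) := closedWalk_W hcl rfl
  obtain ⟨dv, hdv, rfl⟩ := hv
  have hdv' : dv ∈ (du :: t) ++ s := by
    simp only [List.mem_append, List.mem_cons] at hdv ⊢; tauto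
  obtain ⟨s2, t2, heq⟩ := List.append_of_mem hdv'
  rw [heq] at hW
  obtain ⟨m, h1, h2⟩ := hW.split
  obtain ⟨hm, _⟩ := h2.cons_inv
  subst hm
  refine ⟨s2, h1, ?_⟩
  intro d hd
  have : d ∈ (du :: t) ++ s := by rw [heq]; exact List.mem_append_left _ hd
  simp only [List.mem_append, List.mem_cons] at this ⊢; tauto

/-- In a closed walk, targets of darts are also visited vertices. -/
lemma dtgt_mem_vertsOf {G : Multigraph V E} {w : List (Dart E)} (h : G.IsClosedWalk w)
    {d : Dart E} (hd : d ∈ w) : G.dtgt d ∈ G.vertsOf w := by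
  obtain ⟨s, t, rfl⟩ := List.append_of_mem hd
  have hw' : (s ++ d :: t).rotate s.length = (d :: t) ++ s := by
    rw [List.rotate_eq_drop_append_take (by simp), List.drop_left, List.take_left]
  have hcl : G.IsClosedWalk ((d :: t) ++ s) := hw' ▸ h.rotate s.length
  have hW : W G (G.dsrc d) ((d :: t) ++ s) (G.dsrc d) := closedWalk_W hcl rfl
  obtain ⟨_, hW'⟩ := hW.cons_inv
  simp only [List.append_eq] at hW'
  cases hts : t ++ s with
  | nil =>
    rw [hts] at hW'
    have := hW'.nil_inv
    exact ⟨d, hd, this.symm ▸ rfl⟩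
  | cons d2 r =>
    rw [hts] at hW'
    obtain ⟨h2, _⟩ := hW'.cons_inv
    refine ⟨d2, ?_, h2⟩
    have : d2 ∈ t ++ s := by rw [hts]; simp
    simp only [List.mem_append, List.mem_cons] at this ⊢; tauto

lemma dsrc_mem_vertsOf {G : Multigraph V E} {w : List (Dart E)}
    {d : Dart E} (hd : d ∈ w) : G.dsrc d ∈ G.vertsOf w := ⟨d, hd, rfl⟩

/-- Split a walk at the first occurrence of a vertex satisfying `P`. -/
lemma W.firstHit {G : Multigraph V E} {u v : V} {w : List (Dart E)} (P : V → Prop)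
    (h : W G u w v) (hv : P v) :
    ∃ α w1 w2, w = w1 ++ w2 ∧ W G u w1 α ∧ W G α w2 v ∧ P α ∧
      ∀ d ∈ w1, ¬ P (G.dsrc d) := by
  revert hv
  induction h with
  | nil u => exact fun hv => ⟨u, [], [], rfl, W.nil u, W.nil u, hv, by simp⟩
  | cons d h ih =>
    intro hv
    by_cases hP : P (G.dsrc d)
    · exact ⟨G.dsrc d, [], _, rfl, W.nil _, W.cons d h, hP, by simp⟩
    · obtain ⟨α, w1, w2, heq, h1, h2, hα, hfree⟩ := ih hv
      refine ⟨α, d :: w1, w2, by rw [heq]; rfl, W.cons d h1, h2, hα, ?_⟩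
      intro d' hd'
      rcases List.mem_cons.mp hd' with rfl | hd'
      · exact hP
      · exact hfree d' hd'

/-- Extract the suffix of a walk from an occurrence of a vertex. -/
lemma W.suffixFrom {G : Multigraph V E} {a v z : V} {p : List (Dart E)}
    (h : W G a p v) (hz : z ∈ G.vlist a p) :
    ∃ q, q.Sublist p ∧ W G z q v ∧ (G.vlist z q).Sublist (G.vlist a p) := by
  induction h with
  | nil u =>
    simp only [vlist, List.map_nil, List.mem_singleton] at hz
    subst hz
    exact ⟨[], List.Sublist.refl _, W.nil _, List.Sublist.refl _⟩
  | cons d h ih =>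
    rename_i rest v'
    rw [vlist_cons] at hz
    rcases List.mem_cons.mp hz with rfl | hz'
    · exact ⟨d :: rest, List.Sublist.refl _, W.cons d h, List.Sublist.refl _⟩
    · obtain ⟨q, hs, hw, hvs⟩ := ih hz'
      exact ⟨q, hs.trans (List.sublist_cons_self _ _), hw,
        hvs.trans ((G.vlist_cons _ d rest) ▸ List.sublist_cons_self _ _)⟩

/-- Extract a vertex-simple walk. -/
lemma W.simplify {G : Multigraph V E} {u v : V} {w : List (Dart E)} (h : W G u w v) :
    ∃ p, p.Sublist w ∧ W G u p v ∧ (G.vlist u p).Nodup := by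
  induction h with
  | nil u => exact ⟨[], List.Sublist.refl _, W.nil u, by simp [vlist]⟩
  | cons d h ih =>
    obtain ⟨p, hs, hw, hn⟩ := ih
    by_cases hu : G.dsrc d ∈ G.vlist (G.dtgt d) p
    · obtain ⟨q, hs2, hw2, hvs⟩ := hw.suffixFrom hu
      exact ⟨q, (hs2.trans hs).trans (List.sublist_cons_self _ _), hw2, hvs.nodup hn⟩
    · refine ⟨d :: p, hs.cons_cons d, W.cons d hw, ?_⟩
      rw [vlist_cons]
      exact List.nodup_cons.mpr ⟨hu, hn⟩

/-- Remove stationary (loop) darts from a walk. -/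
lemma W.deloop {G : Multigraph V E} {u v : V} {w : List (Dart E)} (h : W G u w v) :
    ∃ p, W G u p v ∧ (∀ d ∈ p, d ∈ w) ∧ ∀ d ∈ p, G.dsrc d ≠ G.dtgt d := by
  induction h with
  | nil u => exact ⟨[], W.nil u, by simp, by simp⟩
  | cons d h ih =>
    obtain ⟨p, hw, hmem, hnl⟩ := ih
    by_cases hd : G.dsrc d = G.dtgt d
    · exact ⟨p, hd ▸ hw, fun d' hd' => List.mem_cons_of_mem _ (hmem d' hd'),  hnl⟩
    · exact ⟨d :: p, W.cons d hw,
        fun d' hd' => by rcases List.mem_cons.mp hd' with rfl | hd' <;>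
          [exact List.mem_cons_self; exact List.mem_cons_of_mem _ (hmem d' hd')],
        fun d' hd' => by rcases List.mem_cons.mp hd' with rfl | hd' <;>
          [exact hd; exact hnl d' hd']⟩

lemma dsrc_eq_or_dtgt {G : Multigraph V E} {d d' : Dart E} (h : d.1 = d'.1) :
    G.dsrc d = G.dsrc d' ∨ G.dsrc d = G.dtgt d' := by
  rcases d with ⟨e, b⟩; rcases d' with ⟨e', b'⟩
  cases h
  cases b <;> cases b' <;> simp [dsrc, dtgt]

/-- A vertex-simple walk repeats no edges. -/
lemma nodup_map_fst_of_simple {G : Multigraph V E} {u v : V} {w : List (Dart E)}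
    (h : W G u w v) (hn : (G.vlist u w).Nodup) : (w.map Prod.fst).Nodup := by
  induction h with
  | nil u => simp
  | cons d h ih =>
    rw [vlist_cons, List.nodup_cons] at hn
    rw [List.map_cons, List.nodup_cons]
    refine ⟨?_, ih hn.2⟩
    intro hmem
    obtain ⟨d', hd', he⟩ := List.mem_map.mp hmem
    rcases dsrc_eq_or_dtgt (G := G) he.symm with h1 | h1
    · exact hn.1 (h1 ▸ dsrc_mem_vlist h hd')
    · exact hn.1 (h1 ▸ dtgt_mem_vlist _ hd')

lemma nodup_map_dsrc_of_simple {G : Multigraph V E} {u v : V} {w : List (Dart E)}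
    (h : W G u w v) (hn : (G.vlist u w).Nodup) : (w.map G.dsrc).Nodup := by
  have := vlist_eq_dsrc_append h
  rw [this] at hn
  exact (List.nodup_append'.mp hn).1

lemma last_not_mem_map_dsrc_of_simple {G : Multigraph V E} {u v : V} {w : List (Dart E)}
    (h : W G u w v) (hn : (G.vlist u w).Nodup) : v ∉ w.map G.dsrc := by
  have := vlist_eq_dsrc_append h
  rw [this] at hn
  have := (List.nodup_append'.mp hn).2.2
  intro hv
  exact this hv (List.mem_singleton_self v)

end Multigraph
open Multigraph

variable {V E : Type}

/-- The set of edges belonging to cycles of a block. -/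
def blockEdges (G : Multigraph V E) (B : Block G) : Set E :=
  {e | ∃ c : {w : List (Dart E) // G.IsCycle w}, Quot.mk (CycleRel G) c = B ∧ e ∈ edges c.1}

lemma fst_mem_edges {w : List (Dart E)} {d : Dart E} (hd : d ∈ w) :
    d.1 ∈ Multigraph.edges w := ⟨d.2, by cases d; exact hd⟩

lemma dart_endpoints_mem_vertsOfBlock {G : Multigraph V E} {B : Block G} {d : Dart E}
    (hd : d.1 ∈ blockEdges G B) :
    G.dsrc d ∈ vertsOfBlock G B ∧ G.dtgt d ∈ vertsOfBlock G B := by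
  obtain ⟨c, hc, b, hb⟩ := hd
  have hmem : ((d.1, b) : Dart E) ∈ c.1 := hb
  have hs : G.dsrc (d.1, b) ∈ G.vertsOf c.1 := dsrc_mem_vertsOf hmem
  have ht : G.dtgt (d.1, b) ∈ G.vertsOf c.1 := dtgt_mem_vertsOf c.2.1 hmem
  have key : ∀ z ∈ G.vertsOf c.1, z ∈ vertsOfBlock G B := fun z hz => ⟨c, hc, hz⟩
  rcases d with ⟨e, b'⟩
  by_cases hbb : b' = b
  · subst hbb; exact ⟨key _ hs, key _ ht⟩
  · have h1 : G.dsrc (e, b') = G.dtgt (e, b) := by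
      cases b <;> cases b' <;> simp_all [dsrc, dtgt]
    have h2 : G.dtgt (e, b') = G.dsrc (e, b) := by
      cases b <;> cases b' <;> simp_all [dsrc, dtgt]
    exact ⟨h1 ▸ key _ ht, h2 ▸ key _ hs⟩

lemma vertsOf_nonempty {G : Multigraph V E} (c : {w : List (Dart E) // G.IsCycle w}) :
    ∃ z, z ∈ G.vertsOf c.1 := by
  have hne := c.2.1.1
  obtain ⟨d, t, h⟩ := List.exists_cons_of_ne_nil hne
  refine ⟨G.dsrc d, d, ?_, rfl⟩
  rw [h]; simp

lemma cycleRel_shared_vertex {G : Multigraph V E}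
    {c1 c2 : {w : List (Dart E) // G.IsCycle w}} (h : CycleRel G c1 c2) :
    ∃ z, z ∈ G.vertsOf c1.1 ∧ z ∈ G.vertsOf c2.1 := by
  obtain ⟨e, ⟨b1, hb1⟩, ⟨b2, hb2⟩⟩ := h
  refine ⟨G.dsrc (e, b1), dsrc_mem_vertsOf hb1, ?_⟩
  rcases dsrc_eq_or_dtgt (G := G) (d := (e, b1)) (d' := (e, b2)) rfl with h1 | h1
  · exact h1 ▸ dsrc_mem_vertsOf hb2
  · exact h1 ▸ dtgt_mem_vertsOf c2.2.1 hb2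

lemma within_cycle_connect {G : Multigraph V E} {c : {w : List (Dart E) // G.IsCycle w}}
    {u v : V} (hu : u ∈ G.vertsOf c.1) (hv : v ∈ G.vertsOf c.1) :
    ∃ p, W G u p v ∧ ∀ d ∈ p, d.1 ∈ blockEdges G (Quot.mk (CycleRel G) c) := by
  obtain ⟨p, hp, hmem⟩ := closedWalk_connect c.2.1 hu hv
  exact ⟨p, hp, fun d hd => ⟨c, rfl, fst_mem_edges (hmem d hd)⟩⟩

lemma eqvGen_connect {G : Multigraph V E}
    {c1 c2 : {w : List (Dart E) // G.IsCycle w}}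
    (h : Relation.EqvGen (CycleRel G) c1 c2) :
    ∀ u ∈ G.vertsOf c1.1, ∀ v ∈ G.vertsOf c2.1,
      ∃ p, W G u p v ∧ ∀ d ∈ p, d.1 ∈ blockEdges G (Quot.mk (CycleRel G) c1) := by
  induction h with
  | rel a b hab =>
    intro u hu v hv
    obtain ⟨z, hz1, hz2⟩ := cycleRel_shared_vertex hab
    obtain ⟨p1, hp1, he1⟩ := within_cycle_connect hu hz1
    obtain ⟨p2, hp2, he2⟩ := within_cycle_connect hz2 hv
    refine ⟨p1 ++ p2, hp1.append hp2, ?_⟩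
    intro d hd
    rcases List.mem_append.mp hd with hd | hd
    · exact he1 d hd
    · exact (Quot.sound hab) ▸ he2 d hd
  | refl a =>
    intro u hu v hv
    exact within_cycle_connect hu hv
  | symm a b hab ih =>
    intro u hu v hv
    obtain ⟨p, hp, he⟩ := ih v hv u hu
    refine ⟨p.reverse.map dflip, hp.reverse, ?_⟩
    intro d hd
    simp only [List.mem_map, List.mem_reverse] at hd
    obtain ⟨d', hd', rfl⟩ := hd
    rw [← Quot.eqvGen_sound hab]
    exact he d' hd'
  | trans a b c hab hbc ih1 ih2 =>
    intro u hu v hv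
    obtain ⟨z, hz⟩ := vertsOf_nonempty b
    obtain ⟨p1, hp1, he1⟩ := ih1 u hu z hz
    obtain ⟨p2, hp2, he2⟩ := ih2 z hz v hv
    refine ⟨p1 ++ p2, hp1.append hp2, ?_⟩
    intro d hd
    rcases List.mem_append.mp hd with hd | hd
    · exact he1 d hd
    · rw [Quot.eqvGen_sound hab]
      exact he2 d hd

lemma block_connect {G : Multigraph V E} {B : Block G} {u v : V}
    (hu : u ∈ vertsOfBlock G B) (hv : v ∈ vertsOfBlock G B) :
    ∃ p, W G u p v ∧ ∀ d ∈ p, d.1 ∈ blockEdges G B := by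
  obtain ⟨c1, hc1, hu'⟩ := hu
  obtain ⟨c2, hc2, hv'⟩ := hv
  have heq : Quot.mk (CycleRel G) c1 = Quot.mk (CycleRel G) c2 := by rw [hc1, hc2]
  obtain ⟨p, hp, he⟩ := eqvGen_connect (Quot.eqvGen_exact heq) u hu' v hv'
  exact ⟨p, hp, fun d hd => hc1 ▸ he d hd⟩

/-- Glue two internally disjoint simple paths into a cycle lying in block `B`. -/
lemma cycle_of_two_paths {G : Multigraph V E} {B : Block G} {c c' : V} (hne : c ≠ c')
    {p q : List (Dart E)} (hp : W G c p c') (hq : W G c' q c)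
    (hpn : (G.vlist c p).Nodup) (hqn : (G.vlist c' q).Nodup)
    (hedisj : ∀ d ∈ p, d.1 ∉ q.map Prod.fst)
    (hqB : ∀ d ∈ q, d.1 ∈ blockEdges G B)
    (hsdisj : ∀ z ∈ p.map G.dsrc, z ∉ q.map G.dsrc) :
    ∃ hcyc : G.IsCycle (p ++ q), Quot.mk (CycleRel G) ⟨p ++ q, hcyc⟩ = B := by
  have hqne : q ≠ [] := by
    intro h; subst h; exact hne (hq.nil_inv).symm
  have hWc : W G c (p ++ q) c := hp.append hq
  have hIW := isWalkFrom_iff_W.mpr hWc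
  obtain ⟨hchain, _, hhead, hlast⟩ := hIW
  have hpqne : p ++ q ≠ [] := by
    intro h
    rcases List.append_eq_nil_iff.mp h with ⟨_, h2⟩
    exact hqne h2
  have hclosed : G.IsClosedWalk (p ++ q) := by
    refine ⟨hpqne, hchain, ?_⟩
    intro dl hdl dh hdh
    rw [hlast dl hdl, hhead dh hdh]
  have hcyc : G.IsCycle (p ++ q) := by
    refine ⟨hclosed, ?_, ?_⟩
    · rw [List.map_append, List.nodup_append']
      refine ⟨nodup_map_fst_of_simple hp hpn, nodup_map_fst_of_simple hq hqn, ?_⟩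
      intro e he1 he2
      obtain ⟨d, hd, rfl⟩ := List.mem_map.mp he1
      exact hedisj d hd he2
    · rw [List.map_append, List.nodup_append']
      refine ⟨nodup_map_dsrc_of_simple hp hpn, nodup_map_dsrc_of_simple hq hqn, ?_⟩
      intro z hz1 hz2
      exact hsdisj z hz1 hz2
  refine ⟨hcyc, ?_⟩
  obtain ⟨d0, t0, hq0⟩ := List.exists_cons_of_ne_nil hqne
  have hd0q : d0 ∈ q := by rw [hq0]; simp
  obtain ⟨c0, hc0, he0⟩ := hqB d0 hd0q
  have hrel : CycleRel G ⟨p ++ q, hcyc⟩ c0 :=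
    ⟨d0.1, fst_mem_edges (List.mem_append_right p hd0q), he0⟩
  rw [Quot.sound hrel, hc0]
open Multigraph

variable {V E : Type}

/-- A simple path leaving a block and re-entering at a different vertex is absorbed:
contradiction. -/
lemma no_handle {G : Multigraph V E} {B : Block G} {c c' : V} (hne : c ≠ c')
    (hc : c ∈ vertsOfBlock G B) (hc' : c' ∈ vertsOfBlock G B)
    {p : List (Dart E)} (hp : W G c p c') (hpn : (G.vlist c p).Nodup)
    (hfree : ∀ d ∈ p, G.dsrc d ∉ vertsOfBlock G B ∨ G.dtgt d ∉ vertsOfBlock G B)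
    (hint : ∀ d ∈ p, G.dsrc d ≠ c → G.dsrc d ∉ vertsOfBlock G B) : False := by
  obtain ⟨q0, hq0, hq0e⟩ := block_connect hc' hc
  obtain ⟨q, hqsub, hq, hqn⟩ := hq0.simplify
  have hqe : ∀ d ∈ q, d.1 ∈ blockEdges G B := fun d hd => hq0e d (hqsub.subset hd)
  have hqne : q ≠ [] := fun h => hne (by subst h; exact hq.nil_inv.symm)
  have hpne : p ≠ [] := fun h => hne (by subst h; exact hp.nil_inv)
  -- edge disjointness
  have hedisj : ∀ d ∈ p, d.1 ∉ q.map Prod.fst := by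
    intro d hd hmem
    obtain ⟨d', hd', he⟩ := List.mem_map.mp hmem
    have : d.1 ∈ blockEdges G B := he ▸ hqe d' hd'
    obtain ⟨h1, h2⟩ := dart_endpoints_mem_vertsOfBlock this
    rcases hfree d hd with h | h
    · exact h h1
    · exact h h2
  have hsdisj : ∀ z ∈ p.map G.dsrc, z ∉ q.map G.dsrc := by
    intro z hz1 hz2
    obtain ⟨d, hd, rfl⟩ := List.mem_map.mp hz1
    obtain ⟨d', hd', he'⟩ := List.mem_map.mp hz2
    by_cases hzc : G.dsrc d = c
    · have : c ∉ q.map G.dsrc := last_not_mem_map_dsrc_of_simple hq hqn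
      exact this (hzc ▸ hz2)
    · refine hint d hd hzc ?_
      have : G.dsrc d' ∈ vertsOfBlock G B := (dart_endpoints_mem_vertsOfBlock (hqe d' hd')).1
      exact he' ▸ this
  obtain ⟨hcyc, hclass⟩ := cycle_of_two_paths hne hp hq hpn hqn hedisj hqe hsdisj
  -- p has a vertex outside the block
  obtain ⟨d1, t1, hp1⟩ := List.exists_cons_of_ne_nil hpne
  have hd1p : d1 ∈ p := by rw [hp1]; simp
  have hd1src : G.dsrc d1 = c := by
    rw [hp1] at hp; exact hp.cons_inv.1
  have houtside : G.dtgt d1 ∉ vertsOfBlock G B := by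
    rcases hfree d1 hd1p with h | h
    · exact absurd (hd1src ▸ hc) h
    · exact h
  refine houtside ?_
  refine ⟨⟨p ++ q, hcyc⟩, hclass, ?_⟩
  exact dtgt_mem_vertsOf hcyc.1 (List.mem_append_left q hd1p)

/-- Two vertices of a block joined by a walk whose darts each have an endpoint
outside the block must be equal. -/
lemma free_gate_aux {G : Multigraph V E} {B : Block G} :
    ∀ n (w : List (Dart E)) (c c' : V), w.length ≤ n → W G c w c' →
    (∀ d ∈ w, G.dsrc d ∉ vertsOfBlock G B ∨ G.dtgt d ∉ vertsOfBlock G B) →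
    c ∈ vertsOfBlock G B → c' ∈ vertsOfBlock G B → c = c' := by
  intro n
  induction n with
  | zero =>
    intro w c c' hlen hw _ _ _
    have : w = [] := List.length_eq_zero_iff.mp (Nat.le_zero.mp hlen)
    subst this
    exact hw.nil_inv
  | succ n ih =>
    intro w c c' hlen hw hfree hc hc'
    obtain ⟨p, hpsub, hp, hpn⟩ := hw.simplify
    have hpfree : ∀ d ∈ p, G.dsrc d ∉ vertsOfBlock G B ∨ G.dtgt d ∉ vertsOfBlock G B :=
      fun d hd => hfree d (hpsub.subset hd)
    by_cases hx : ∃ d ∈ p, G.dsrc d ∈ vertsOfBlock G B ∧ G.dsrc d ≠ c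
    · obtain ⟨d, hd, hdS, hdc⟩ := hx
      obtain ⟨s, t, rfl⟩ := List.append_of_mem hd
      obtain ⟨m, hm1, hm2⟩ := hp.split
      have hmd : G.dsrc d = m := hm2.cons_inv.1
      have hsne : s ≠ [] := by
        intro h; subst h; exact hdc (hmd.trans hm1.nil_inv.symm)
      have hplen : (s ++ d :: t).length ≤ n + 1 := le_trans hpsub.length_le hlen
      have hslen : s.length ≤ n := by
        simp only [List.length_append, List.length_cons] at hplen
        omega
      have htlen : (d :: t).length ≤ n := by
        have h1 : 1 ≤ s.length := List.length_pos_iff.mpr hsne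
        simp only [List.length_append, List.length_cons] at hplen ⊢
        omega
      have hfree_s : ∀ d' ∈ s, G.dsrc d' ∉ vertsOfBlock G B ∨ G.dtgt d' ∉ vertsOfBlock G B :=
        fun d' hd' => hpfree d' (List.mem_append_left _ hd')
      have hfree_t : ∀ d' ∈ d :: t, G.dsrc d' ∉ vertsOfBlock G B ∨ G.dtgt d' ∉ vertsOfBlock G B :=
        fun d' hd' => hpfree d' (List.mem_append_right _ hd')
      have e1 : c = m := ih s c m hslen hm1 hfree_s hc (hmd ▸ hdS)
      have e2 : m = c' := ih (d :: t) m c' htlen hm2 hfree_t (hmd ▸ hdS) hc'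
      exact e1.trans e2
    · push_neg at hx
      by_contra hcc
      refine no_handle hcc hc hc' hp hpn hpfree ?_
      intro d hd hdc
      intro hdS
      exact hdc (hx d hd hdS)

lemma free_gate {G : Multigraph V E} {B : Block G} {w : List (Dart E)} {c c' : V}
    (hw : W G c w c')
    (hfree : ∀ d ∈ w, G.dsrc d ∉ vertsOfBlock G B ∨ G.dtgt d ∉ vertsOfBlock G B)
    (hc : c ∈ vertsOfBlock G B) (hc' : c' ∈ vertsOfBlock G B) : c = c' :=
  free_gate_aux w.length w c c' le_rfl hw hfree hc hc'

/-- A non-loop edge of another block cannot have both endpoints in block `B`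
unless the blocks coincide. -/
lemma free_of_other_block {G : Multigraph V E} {B B' : Block G} (hBB : B ≠ B') {d : Dart E}
    (hd : d.1 ∈ blockEdges G B') (hloop : G.dsrc d ≠ G.dtgt d)
    (h1 : G.dsrc d ∈ vertsOfBlock G B) (h2 : G.dtgt d ∈ vertsOfBlock G B) : False := by
  obtain ⟨c0', hc0', he0'⟩ := hd
  by_cases hin : d.1 ∈ blockEdges G B
  · obtain ⟨c0, hc0, he0⟩ := hin
    have hrel : CycleRel G c0 c0' := ⟨d.1, he0, he0'⟩
    exact hBB (hc0 ▸ hc0' ▸ Quot.sound hrel)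
  · obtain ⟨q0, hq0, hq0e⟩ := block_connect h2 h1
    obtain ⟨q, hqsub, hq, hqn⟩ := hq0.simplify
    have hqe : ∀ d' ∈ q, d'.1 ∈ blockEdges G B := fun d' hd' => hq0e d' (hqsub.subset hd')
    have hpw : W G (G.dsrc d) [d] (G.dtgt d) := W.cons d (W.nil _)
    have hpn : (G.vlist (G.dsrc d) [d]).Nodup := by
      simp [vlist, List.nodup_cons, hloop]
    have hedisj : ∀ d' ∈ [d], d'.1 ∉ q.map Prod.fst := by
      intro d' hd' hmem
      rcases List.mem_singleton.mp hd' with rfl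
      obtain ⟨d'', hd'', he''⟩ := List.mem_map.mp hmem
      exact hin (he'' ▸ hqe d'' hd'')
    have hsdisj : ∀ z ∈ [d].map G.dsrc, z ∉ q.map G.dsrc := by
      intro z hz1 hz2
      simp only [List.map_cons, List.map_nil, List.mem_singleton] at hz1
      subst hz1
      exact last_not_mem_map_dsrc_of_simple hq hqn hz2
    obtain ⟨hcyc, hclass⟩ := cycle_of_two_paths hloop hpw hq hpn hqn hedisj hqe hsdisj
    have hd_mem : d ∈ [d] ++ q := List.mem_append_left q (List.mem_singleton_self d)
    have hrel' : CycleRel G ⟨[d] ++ q, hcyc⟩ c0' := ⟨d.1, fst_mem_edges hd_mem, he0'⟩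
    exact hBB (hclass ▸ hc0' ▸ Quot.sound hrel')
namespace Multigraph

variable {V E : Type}

lemma gdist_set_nonneg {G : Multigraph V E} {l : E → ℝ} (hl : ∀ e, 0 < l e) (u v : V) :
    ∀ x ∈ {x | ∃ w, G.IsWalkFrom w u v ∧ walkLength l w = x}, 0 ≤ x := by
  rintro x ⟨w, _, rfl⟩
  exact walkLength_nonneg hl w

lemma gdist_bddBelow {G : Multigraph V E} {l : E → ℝ} (hl : ∀ e, 0 < l e) (u v : V) :
    BddBelow {x | ∃ w, G.IsWalkFrom w u v ∧ walkLength l w = x} :=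
  ⟨0, fun x hx => gdist_set_nonneg hl u v x hx⟩

lemma gdist_le_walk {G : Multigraph V E} {l : E → ℝ} (hl : ∀ e, 0 < l e) {u v : V}
    {w : List (Dart E)} (hw : W G u w v) : G.gdist l u v ≤ walkLength l w :=
  csInf_le (gdist_bddBelow hl u v) ⟨w, isWalkFrom_iff_W.mpr hw, rfl⟩

lemma gdist_nonneg {G : Multigraph V E} {l : E → ℝ} (hl : ∀ e, 0 < l e) (u v : V) :
    0 ≤ G.gdist l u v :=
  Real.sInf_nonneg (gdist_set_nonneg hl u v)

lemma gdist_self {G : Multigraph V E} {l : E → ℝ} (hl : ∀ e, 0 < l e) (u : V) :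
    G.gdist l u u = 0 :=
  le_antisymm (by simpa [walkLength] using gdist_le_walk hl (W.nil (G := G) u))
    (gdist_nonneg hl u u)

lemma walkLength_ge_mul {l : E → ℝ} {ε : ℝ} (hε : ∀ e, ε ≤ l e) (w : List (Dart E)) :
    ε * w.length ≤ walkLength l w := by
  induction w with
  | nil => simp [walkLength]
  | cons d t ih =>
    rw [walkLength_cons, List.length_cons]
    push_cast
    have := hε d.1
    nlinarith [ih]

/-- Shortest walks exist. -/
lemma gdist_exists [Fintype E] {G : Multigraph V E} {l : E → ℝ} (hl : ∀ e, 0 < l e)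
    (hconn : G.Conn) (u v : V) :
    ∃ w, W G u w v ∧ walkLength l w = G.gdist l u v := by
  by_cases huv : u = v
  · subst huv
    exact ⟨[], W.nil u, by simp [walkLength, gdist_self hl]⟩
  · obtain ⟨w0, hw0'⟩ := hconn u v
    have hw0 : W G u w0 v := isWalkFrom_iff_W.mp hw0'
    have hw0ne : w0 ≠ [] := fun h => huv (by subst h; exact hw0.nil_inv)
    obtain ⟨d0, t0, rfl⟩ := List.exists_cons_of_ne_nil hw0ne
    have hE : Nonempty E := ⟨d0.1⟩
    set ε := (Finset.univ : Finset E).inf' Finset.univ_nonempty l with hεdef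
    have hε : 0 < ε := by
      rw [hεdef, Finset.lt_inf'_iff]
      exact fun e _ => hl e
    have hεle : ∀ e, ε ≤ l e := fun e => Finset.inf'_le l (Finset.mem_univ e)
    set B0 := walkLength l (d0 :: t0) with hB0
    set N := Nat.ceil (B0 / ε) with hN
    set A := {x | ∃ w : List (Dart E), w.length ≤ N ∧ G.IsWalkFrom w u v ∧ walkLength l w = x}
      with hA
    have hfin : A.Finite := by
      have h1 : {w : List (Dart E) | w.length ≤ N}.Finite := List.finite_length_le _ N
      refine Set.Finite.subset (h1.image (walkLength l)) ?_
      rintro x ⟨w, h1, h2, rfl⟩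
      exact ⟨w, h1, rfl⟩
    have hlen0 : (d0 :: t0).length ≤ N := by
      have h1 : ε * (d0 :: t0).length ≤ B0 := walkLength_ge_mul hεle _
      have h2 : ((d0 :: t0).length : ℝ) ≤ B0 / ε := by
        rw [le_div_iff₀ hε]
        linarith [h1]
      have h3 : ((d0 :: t0).length : ℝ) ≤ (N : ℝ) := le_trans h2 (Nat.le_ceil _)
      exact_mod_cast h3
    have hAne : A.Nonempty := ⟨B0, ⟨d0 :: t0, hlen0, hw0', rfl⟩⟩
    have hmem := hAne.csInf_mem hfin
    obtain ⟨w1, hw1len, hw1, hw1l⟩ := hmem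
    have hBdd : BddBelow A := hfin.bddBelow
    have hle1 : G.gdist l u v ≤ sInf A :=
      csInf_le (gdist_bddBelow hl u v) ⟨w1, hw1, hw1l⟩
    have hle2 : sInf A ≤ G.gdist l u v := by
      refine le_csInf ⟨B0, d0 :: t0, hw0', rfl⟩ ?_
      rintro x ⟨w, hw, rfl⟩
      by_cases hlen : w.length ≤ N
      · exact csInf_le hBdd ⟨w, hlen, hw, rfl⟩
      · push_neg at hlen
        have h1 : ε * w.length ≤ walkLength l w := walkLength_ge_mul hεle w
        have h2 : sInf A ≤ B0 := csInf_le hBdd ⟨d0 :: t0, hlen0, hw0', rfl⟩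
        have h3 : B0 ≤ ε * N := by
          have := Nat.le_ceil (B0 / ε)
          rw [← hN] at this
          calc B0 = ε * (B0 / ε) := by field_simp
          _ ≤ ε * N := by
            refine mul_le_mul_of_nonneg_left this hε.le
        have h4 : (N : ℝ) + 1 ≤ (w.length : ℝ) := by exact_mod_cast hlen
        nlinarith
    have : sInf A = G.gdist l u v := le_antisymm hle2 hle1
    exact ⟨w1, isWalkFrom_iff_W.mp hw1, by rw [hw1l, this]⟩

lemma gdist_symm [Fintype E] {G : Multigraph V E} {l : E → ℝ} (hl : ∀ e, 0 < l e)
    (hconn : G.Conn) (u v : V) : G.gdist l u v = G.gdist l v u := by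
  have key : ∀ a b : V, G.gdist l a b ≤ G.gdist l b a := by
    intro a b
    obtain ⟨w, hw, hwl⟩ := gdist_exists hl hconn b a
    have := gdist_le_walk hl hw.reverse
    rwa [walkLength_reverse_flip, hwl] at this
  exact le_antisymm (key u v) (key v u)

lemma gdist_triangle [Fintype E] {G : Multigraph V E} {l : E → ℝ} (hl : ∀ e, 0 < l e)
    (hconn : G.Conn) (u v z : V) :
    G.gdist l u z ≤ G.gdist l u v + G.gdist l v z := by
  obtain ⟨w1, hw1, hl1⟩ := gdist_exists hl hconn u v
  obtain ⟨w2, hw2, hl2⟩ := gdist_exists hl hconn v z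
  have := gdist_le_walk hl (hw1.append hw2)
  rwa [walkLength_append, hl1, hl2] at this

end Multigraph

open Multigraph

lemma vertsOfBlock_nonempty {V E : Type} {G : Multigraph V E} (B : Block G) :
    ∃ z, z ∈ vertsOfBlock G B := by
  obtain ⟨c, rfl⟩ := Quot.exists_rep B
  obtain ⟨z, hz⟩ := vertsOf_nonempty c
  exact ⟨z, c, rfl, hz⟩

lemma blockDist_set_nonneg {V E : Type} {G : Multigraph V E} {l : E → ℝ}
    (hl : ∀ e, 0 < l e) (B1 B2 : Block G) :
    ∀ x ∈ {x | ∃ u ∈ vertsOfBlock G B1, ∃ v ∈ vertsOfBlock G B2, G.gdist l u v = x}, 0 ≤ x := by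
  rintro x ⟨u, hu, v, hv, rfl⟩
  exact gdist_nonneg hl u v

lemma blockDist_nonneg {V E : Type} {G : Multigraph V E} {l : E → ℝ}
    (hl : ∀ e, 0 < l e) (B1 B2 : Block G) : 0 ≤ blockDist G l B1 B2 :=
  Real.sInf_nonneg (blockDist_set_nonneg hl B1 B2)

lemma blockDist_le {V E : Type} {G : Multigraph V E} {l : E → ℝ}
    (hl : ∀ e, 0 < l e) {B1 B2 : Block G} {u v : V}
    (hu : u ∈ vertsOfBlock G B1) (hv : v ∈ vertsOfBlock G B2) :
    blockDist G l B1 B2 ≤ G.gdist l u v :=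
  csInf_le ⟨0, blockDist_set_nonneg hl B1 B2⟩ ⟨u, hu, v, hv, rfl⟩

lemma blockDist_exists {V E : Type} [Fintype V] {G : Multigraph V E} {l : E → ℝ}
    (B1 B2 : Block G) :
    ∃ u ∈ vertsOfBlock G B1, ∃ v ∈ vertsOfBlock G B2,
      G.gdist l u v = blockDist G l B1 B2 := by
  have hfin : {x | ∃ u ∈ vertsOfBlock G B1, ∃ v ∈ vertsOfBlock G B2,
      G.gdist l u v = x}.Finite := by
    refine Set.Finite.subset (Set.finite_range (fun p : V × V => G.gdist l p.1 p.2)) ?_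
    rintro x ⟨u, hu, v, hv, rfl⟩
    exact ⟨(u, v), rfl⟩
  obtain ⟨z1, hz1⟩ := vertsOfBlock_nonempty B1
  obtain ⟨z2, hz2⟩ := vertsOfBlock_nonempty B2
  have hne : {x | ∃ u ∈ vertsOfBlock G B1, ∃ v ∈ vertsOfBlock G B2,
      G.gdist l u v = x}.Nonempty := ⟨_, z1, hz1, z2, hz2, rfl⟩
  exact hne.csInf_mem hfin
open Multigraph

section Final

variable {V E : Type}

lemma free_reverse {G : Multigraph V E} {S : Set V} {w : List (Dart E)}
    (h : ∀ d ∈ w, G.dsrc d ∉ S ∨ G.dtgt d ∉ S) :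
    ∀ d ∈ w.reverse.map dflip, G.dsrc d ∉ S ∨ G.dtgt d ∉ S := by
  intro d hd
  simp only [List.mem_map, List.mem_reverse] at hd
  obtain ⟨d', hd', rfl⟩ := hd
  rw [dsrc_dflip, dtgt_dflip]
  exact (h d' hd').symm

lemma free_append {G : Multigraph V E} {S : Set V} {w1 w2 : List (Dart E)}
    (h1 : ∀ d ∈ w1, G.dsrc d ∉ S ∨ G.dtgt d ∉ S)
    (h2 : ∀ d ∈ w2, G.dsrc d ∉ S ∨ G.dtgt d ∉ S) :
    ∀ d ∈ w1 ++ w2, G.dsrc d ∉ S ∨ G.dtgt d ∉ S := by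
  intro d hd
  rcases List.mem_append.mp hd with hd | hd
  · exact h1 d hd
  · exact h2 d hd

/-- A free-walk from a vertex of one block to a first-hit vertex of `B1`,
of length at most the block distance. -/
lemma approach_walk {V E : Type} [Fintype V] [Fintype E] {G : Multigraph V E}
    {l : E → ℝ} (hl : ∀ e, 0 < l e) (hconn : G.Conn) (B1 B' : Block G)
    {u' v' : V} (hu' : u' ∈ vertsOfBlock G B1) (hv' : v' ∈ vertsOfBlock G B')
    (hd : G.gdist l u' v' = blockDist G l B1 B') :
    ∃ β p, β ∈ vertsOfBlock G B1 ∧ W G v' p β ∧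
      (∀ d ∈ p, G.dsrc d ∉ vertsOfBlock G B1 ∨ G.dtgt d ∉ vertsOfBlock G B1) ∧
      G.gdist l v' β ≤ blockDist G l B1 B' := by
  obtain ⟨W3, hW3, hW3l⟩ := gdist_exists hl hconn v' u'
  have hW3l' : walkLength l W3 = blockDist G l B1 B' := by
    rw [hW3l, gdist_symm hl hconn, hd]
  obtain ⟨β, w1, w2, heq, h1, h2, hβ, hfree⟩ :=
    hW3.firstHit (· ∈ vertsOfBlock G B1) hu'
  refine ⟨β, w1, hβ, h1, fun d hd' => Or.inl (hfree d hd'), ?_⟩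
  have hlen : walkLength l w1 ≤ walkLength l W3 := by
    rw [heq, walkLength_append]
    have := walkLength_nonneg hl w2
    linarith
  calc G.gdist l v' β ≤ walkLength l w1 := gdist_le_walk hl h1
  _ ≤ walkLength l W3 := hlen
  _ = blockDist G l B1 B' := hW3l'

/-- A loop-free walk within a block distinct from `B1` is free w.r.t. `B1`. -/
lemma block_free_walk {V E : Type} {G : Multigraph V E} {B1 B' : Block G}
    (hne : B1 ≠ B') {a b : V}
    (ha : a ∈ vertsOfBlock G B') (hb : b ∈ vertsOfBlock G B') :
    ∃ p, W G a p b ∧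
      ∀ d ∈ p, G.dsrc d ∉ vertsOfBlock G B1 ∨ G.dtgt d ∉ vertsOfBlock G B1 := by
  obtain ⟨p0, hp0, hp0e⟩ := block_connect ha hb
  obtain ⟨p, hp, hpmem, hpnl⟩ := hp0.deloop
  refine ⟨p, hp, ?_⟩
  intro d hd
  by_contra hcon
  push_neg at hcon
  exact free_of_other_block hne (hp0e d (hpmem d hd)) (hpnl d hd) hcon.1 hcon.2

end Final

theorem stmt19' {V E : Type} [Fintype V] [Fintype E] (G : Multigraph V E)
    (l : E → ℝ) (hl : ∀ e, 0 < l e) (hconn : G.Conn)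
    (B1 B2 B3 : Block G) :
    (B1 ≠ B2 →
      (blockDist G l B1 B2 = 0 ↔ ∃ v, v ∈ vertsOfBlock G B1 ∧ v ∈ vertsOfBlock G B2)) ∧
    (blockDist G l B1 B2 + blockDist G l B1 B3 < blockDist G l B2 B3 →
      ∀ x ∈ vertsOfBlock G B2, ∀ y ∈ vertsOfBlock G B3, ∀ w,
        G.IsWalkFrom w x y →
        Multigraph.walkLength l w = blockDist G l B2 B3 →
        ∃ a b, a ∈ vertsOfBlock G B1 ∧ b ∈ vertsOfBlock G B1 ∧ a ≠ b ∧
          a ∈ walkVerts G x w ∧ b ∈ walkVerts G x w) := by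
  constructor
  · intro _
    constructor
    · intro h0
      obtain ⟨u, hu, v, hv, huv⟩ := blockDist_exists (l := l) B1 B2
      rw [h0] at huv
      by_cases heq : u = v
      · exact ⟨v, heq ▸ hu, hv⟩
      · exfalso
        obtain ⟨w0, hw0'⟩ := hconn u v
        have hw0 : W G u w0 v := isWalkFrom_iff_W.mp hw0'
        have hw0ne : w0 ≠ [] := fun h => heq (by subst h; exact hw0.nil_inv)
        obtain ⟨d0, t0, rfl⟩ := List.exists_cons_of_ne_nil hw0ne
        have hE : Nonempty E := ⟨d0.1⟩
        set ε := (Finset.univ : Finset E).inf' Finset.univ_nonempty l with hεdef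
        have hε : 0 < ε := by
          rw [hεdef, Finset.lt_inf'_iff]
          exact fun e _ => hl e
        have hεle : ∀ e, ε ≤ l e := fun e => Finset.inf'_le l (Finset.mem_univ e)
        have hge : ε ≤ G.gdist l u v := by
          refine le_csInf ⟨walkLength l (d0 :: t0), (d0 :: t0), hw0', rfl⟩ ?_
          rintro x ⟨w, hw, rfl⟩
          have hwW : W G u w v := isWalkFrom_iff_W.mp hw
          have hwne : w ≠ [] := fun h => heq (by subst h; exact hwW.nil_inv)
          obtain ⟨d1, t1, rfl⟩ := List.exists_cons_of_ne_nil hwne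
          rw [walkLength_cons]
          have := walkLength_nonneg hl t1
          have := hεle d1.1
          linarith
        rw [huv] at hge
        linarith
    · rintro ⟨v, h1, h2⟩
      refine le_antisymm ?_ (blockDist_nonneg hl B1 B2)
      have := blockDist_le hl h1 h2
      rwa [gdist_self hl] at this
  · intro hlt x hx y hy w hwIW _
    by_contra hno
    push_neg at hno
    have hsingle : ∀ a b, a ∈ vertsOfBlock G B1 → b ∈ vertsOfBlock G B1 →
        a ∈ walkVerts G x w → b ∈ walkVerts G x w → a = b := by
      intro a b ha hb hma hmb
      by_contra hab
      exact hno a b ha hb hab hma hmb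
    have hw : W G x w y := isWalkFrom_iff_W.mp hwIW
    -- the middle walk, loop-removed, is free w.r.t. B1
    obtain ⟨wm, hwm, hwmmem, hwmnl⟩ := hw.deloop
    have hwmfree : ∀ d ∈ wm, G.dsrc d ∉ vertsOfBlock G B1 ∨ G.dtgt d ∉ vertsOfBlock G B1 := by
      intro d hd
      by_contra hcon
      push_neg at hcon
      have hmem1 : G.dsrc d ∈ walkVerts G x w :=
        mem_walkVerts_iff.mpr (dsrc_mem_vlist hw (hwmmem d hd))
      have hmem2 : G.dtgt d ∈ walkVerts G x w :=
        Or.inr ⟨d, hwmmem d hd, rfl⟩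
      exact (hwmnl d hd) (hsingle _ _ hcon.1 hcon.2 hmem1 hmem2)
    have h12 := blockDist_nonneg hl B1 B2
    have h13 := blockDist_nonneg hl B1 B3
    by_cases hB12 : B1 = B2 <;> by_cases hB13 : B1 = B3
    · -- B1 = B2 = B3
      subst hB12; subst hB13
      have : blockDist G l B1 B1 ≤ G.gdist l x x := blockDist_le hl hx hx
      rw [gdist_self hl] at this
      linarith
    · -- B1 = B2, B1 ≠ B3
      subst hB12
      obtain ⟨u3, hu3, v3, hv3, huv3⟩ := blockDist_exists (l := l) B1 B3
      obtain ⟨β, p3, hβ, hp3, hp3free, hp3le⟩ := approach_walk hl hconn B1 B3 hu3 hv3 huv3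
      obtain ⟨q3, hq3, hq3free⟩ := block_free_walk hB13 hy hv3
      have hchain : W G x (wm ++ (q3 ++ p3)) β := hwm.append (hq3.append hp3)
      have hfree : ∀ d ∈ wm ++ (q3 ++ p3),
          G.dsrc d ∉ vertsOfBlock G B1 ∨ G.dtgt d ∉ vertsOfBlock G B1 :=
        free_append hwmfree (free_append hq3free hp3free)
      have hxβ : x = β := free_gate hchain hfree hx hβ
      have hle : blockDist G l B1 B3 ≤ G.gdist l x v3 := blockDist_le hl hx hv3
      have : G.gdist l x v3 ≤ blockDist G l B1 B3 := by
        rw [gdist_symm hl hconn, hxβ]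
        exact hp3le
      linarith
    · -- B1 ≠ B2, B1 = B3
      subst hB13
      obtain ⟨u2, hu2, v2, hv2, huv2⟩ := blockDist_exists (l := l) B1 B2
      obtain ⟨α, p2, hα, hp2, hp2free, hp2le⟩ := approach_walk hl hconn B1 B2 hu2 hv2 huv2
      obtain ⟨q2, hq2, hq2free⟩ := block_free_walk hB12 hv2 hx
      have hchain : W G α ((p2.reverse.map dflip) ++ (q2 ++ wm)) y :=
        hp2.reverse.append (hq2.append hwm)
      have hfree : ∀ d ∈ (p2.reverse.map dflip) ++ (q2 ++ wm),
          G.dsrc d ∉ vertsOfBlock G B1 ∨ G.dtgt d ∉ vertsOfBlock G B1 :=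
        free_append (free_reverse hp2free) (free_append hq2free hwmfree)
      have hαy : α = y := free_gate hchain hfree hα hy
      have hle : blockDist G l B2 B1 ≤ G.gdist l v2 y := blockDist_le hl hv2 hy
      have : G.gdist l v2 y ≤ blockDist G l B1 B2 := by
        rw [← hαy]
        exact hp2le
      linarith
    · -- B1 ≠ B2, B1 ≠ B3
      obtain ⟨u2, hu2, v2, hv2, huv2⟩ := blockDist_exists (l := l) B1 B2
      obtain ⟨u3, hu3, v3, hv3, huv3⟩ := blockDist_exists (l := l) B1 B3
      obtain ⟨α, p2, hα, hp2, hp2free, hp2le⟩ := approach_walk hl hconn B1 B2 hu2 hv2 huv2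
      obtain ⟨β, p3, hβ, hp3, hp3free, hp3le⟩ := approach_walk hl hconn B1 B3 hu3 hv3 huv3
      obtain ⟨q2, hq2, hq2free⟩ := block_free_walk hB12 hv2 hx
      obtain ⟨q3, hq3, hq3free⟩ := block_free_walk hB13 hy hv3
      have hchain : W G α ((p2.reverse.map dflip) ++ (q2 ++ (wm ++ (q3 ++ p3)))) β :=
        hp2.reverse.append (hq2.append (hwm.append (hq3.append hp3)))
      have hfree : ∀ d ∈ (p2.reverse.map dflip) ++ (q2 ++ (wm ++ (q3 ++ p3))),
          G.dsrc d ∉ vertsOfBlock G B1 ∨ G.dtgt d ∉ vertsOfBlock G B1 :=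
        free_append (free_reverse hp2free)
          (free_append hq2free (free_append hwmfree (free_append hq3free hp3free)))
      have hαβ : α = β := free_gate hchain hfree hα hβ
      have hle : blockDist G l B2 B3 ≤ G.gdist l v2 v3 := blockDist_le hl hv2 hv3
      have htri : G.gdist l v2 v3 ≤ G.gdist l v2 α + G.gdist l α v3 :=
        gdist_triangle hl hconn v2 α v3
      have h2 : G.gdist l v2 α ≤ blockDist G l B1 B2 := hp2le
      have h3 : G.gdist l α v3 ≤ blockDist G l B1 B3 := by
        rw [gdist_symm hl hconn, hαβ]
        exact hp3le
      linarith
/-- in a connected metric graph, two distinct blocks are at distance zero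
iff they share a vertex; and if `d(B₂,B₃) > d(B₁,B₂) + d(B₁,B₃)`, then every distance
realizing path between `B₂` and `B₃` passes through at least two distinct vertices of
`B₁`. -/
theorem stmt19 {V E : Type} [Fintype V] [Fintype E] (G : Multigraph V E)
    (l : E → ℝ) (hl : ∀ e, 0 < l e) (hconn : G.Conn)
    (B1 B2 B3 : Block G) :
    (B1 ≠ B2 →
      (blockDist G l B1 B2 = 0 ↔ ∃ v, v ∈ vertsOfBlock G B1 ∧ v ∈ vertsOfBlock G B2)) ∧
    (blockDist G l B1 B2 + blockDist G l B1 B3 < blockDist G l B2 B3 →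
      ∀ x ∈ vertsOfBlock G B2, ∀ y ∈ vertsOfBlock G B3, ∀ w,
        G.IsWalkFrom w x y →
        Multigraph.walkLength l w = blockDist G l B2 B3 →
        ∃ a b, a ∈ vertsOfBlock G B1 ∧ b ∈ vertsOfBlock G B1 ∧ a ≠ b ∧
          a ∈ walkVerts G x w ∧ b ∈ walkVerts G x w) := by
  exact stmt19' G l hl hconn B1 B2 B3
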